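/- arXiv:2206.01963 — 2 statements merged into one kernel-verified Lean document; each statement's English description precedes it below -/
import Mathlib

section
/- (Newton–Maclaurin inequality) If λ ∈ Γ_k (the Garding cone, i.e., σ_i(λ) > 0 for all 1 ≤ i ≤ k) and 1 ≤ l ≤ k ≤ n-1, then (σ_k(λ)/C(n-1,k))^{1/k} ≤ (σ_l(λ)/C(n-1,l))^{1/l}. -/
open Polynomial

namespace NM


lemma esymm_eq_zero_of_lt {s : Multiset ℝ} {j : ℕ} (h : Multiset.card s < j) :
    s.esymm j = 0 := by
  have hz : Multiset.powersetCard j s = 0 := by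
    apply Multiset.eq_zero_of_forall_notMem
    intro t ht
    rw [Multiset.mem_powersetCard] at ht
    have := Multiset.card_le_card ht.1
    omega
  rw [Multiset.esymm, hz]
  simp

lemma esymm_zero' (s : Multiset ℝ) : s.esymm 0 = 1 := by
  rw [Multiset.esymm, Multiset.powersetCard_zero_left]
  simp

lemma esymm_one' (s : Multiset ℝ) : s.esymm 1 = s.sum := by
  rw [Multiset.esymm, Multiset.powersetCard_one, Multiset.map_map]
  simp

lemma esymm_cons (a : ℝ) (s : Multiset ℝ) (j : ℕ) :
    (a ::ₘ s).esymm (j + 1) = s.esymm (j + 1) + a * s.esymm j := by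
  rw [Multiset.esymm, Multiset.powersetCard_cons, Multiset.map_add, Multiset.sum_add,
    Multiset.map_map]
  congr 1
  rw [Multiset.esymm, ← Multiset.sum_map_mul_left]
  congr 1
  apply Multiset.map_congr rfl
  intro t _
  simp

lemma esymm_card (s : Multiset ℝ) : s.esymm (Multiset.card s) = s.prod := by
  induction s using Multiset.induction_on with
  | empty => simp [esymm_zero']
  | cons a s ih =>
      rw [Multiset.card_cons, esymm_cons, ih, esymm_eq_zero_of_lt (by omega)]
      simp



lemma esymm_inv (s : Multiset ℝ) (h0 : (0:ℝ) ∉ s) :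
    ∀ j ≤ Multiset.card s,
      (s.map Inv.inv).esymm j * s.prod = s.esymm (Multiset.card s - j) := by
  induction s using Multiset.induction_on with
  | empty =>
      intro j hj
      have hj0 : j = 0 := by simpa using hj
      subst hj0
      simp [esymm_zero']
  | cons a s ih =>
      intro j hj
      have ha : a ≠ 0 := fun h => h0 (h ▸ Multiset.mem_cons_self a s)
      have h0' : (0:ℝ) ∉ s := fun h => h0 (Multiset.mem_cons_of_mem h)
      rw [Multiset.card_cons] at hj ⊢
      rw [Multiset.map_cons, Multiset.prod_cons]
      rcases j with _ | i
      · have hec := esymm_card (a ::ₘ s)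
        rw [Multiset.card_cons, Multiset.prod_cons] at hec
        rw [esymm_zero', Nat.sub_zero, hec]
        ring
      · rw [esymm_cons]
        rcases Nat.lt_or_ge i (Multiset.card s) with hlt | hge
        · -- i + 1 ≤ card s
          have h1 := ih h0' (i+1) hlt
          have h2 := ih h0' i (le_of_lt hlt)
          have hsub : Multiset.card s + 1 - (i + 1) = (Multiset.card s - (i+1)) + 1 := by omega
          rw [hsub, esymm_cons]
          have hsub2 : Multiset.card s - (i + 1) + 1 = Multiset.card s - i := by omega
          calc ((s.map Inv.inv).esymm (i + 1) + a⁻¹ * (s.map Inv.inv).esymm i) * (a * s.prod)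
              = a * ((s.map Inv.inv).esymm (i+1) * s.prod)
                + (a⁻¹ * a) * ((s.map Inv.inv).esymm i * s.prod) := by ring
            _ = a * s.esymm (Multiset.card s - (i+1)) + s.esymm (Multiset.card s - i) := by
                rw [h1, h2, inv_mul_cancel₀ ha]; ring
            _ = s.esymm (Multiset.card s - (i + 1) + 1) + a * s.esymm (Multiset.card s - (i + 1)) := by
                rw [hsub2]; ring
        · -- i = card s
          have hi : i = Multiset.card s := by omega
          subst hi
          have h2 := ih h0' (Multiset.card s) le_rfl
          rw [esymm_eq_zero_of_lt (by rw [Multiset.card_map]; omega)]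
          rw [Nat.sub_self, esymm_zero'] at h2
          have hz : Multiset.card s + 1 - (Multiset.card s + 1) = 0 := by omega
          rw [hz, esymm_zero']
          calc (0 + a⁻¹ * (s.map Inv.inv).esymm (Multiset.card s)) * (a * s.prod)
              = (a⁻¹ * a) * ((s.map Inv.inv).esymm (Multiset.card s) * s.prod) := by ring
            _ = 1 := by rw [h2, inv_mul_cancel₀ ha]; ring

lemma cs_ineq (s : Multiset ℝ) :
    s.sum ^ 2 ≤ (Multiset.card s : ℝ) * (s.map (fun x => x^2)).sum := by
  induction s using Multiset.induction_on with
  | empty => simp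
  | cons a s ih =>
      rcases Multiset.empty_or_exists_mem s with rfl | _
      · simp
      · have hc : 1 ≤ (Multiset.card s : ℝ) := by
          have : 1 ≤ Multiset.card s := by
            rcases ‹∃ x, x ∈ s› with ⟨x, hx⟩
            exact Multiset.card_pos.mpr (fun h => by simp [h] at hx)
          exact_mod_cast this
        rw [Multiset.sum_cons, Multiset.map_cons, Multiset.sum_cons, Multiset.card_cons]
        push_cast
        nlinarith [sq_nonneg ((Multiset.card s : ℝ) * a - s.sum), sq_nonneg (a - s.sum),
          mul_nonneg (le_trans zero_le_one hc) (sq_nonneg a), ih]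

lemma sq_sum_eq (s : Multiset ℝ) :
    s.sum ^ 2 = (s.map (fun x => x^2)).sum + 2 * s.esymm 2 := by
  induction s using Multiset.induction_on with
  | empty => simp [esymm_eq_zero_of_lt (s := 0) (j := 2) (by simp)]
  | cons a s ih =>
      rw [Multiset.sum_cons, Multiset.map_cons, Multiset.sum_cons, esymm_cons, esymm_one']
      nlinarith [ih]



lemma choose_id (n j : ℕ) (hj : j + 1 ≤ n) :
    (n - j) * n.choose j = n * (n-1).choose j := by
  obtain ⟨m, rfl⟩ : ∃ m, n = m + 1 := ⟨n - 1, by omega⟩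
  have h1 : (m+1).choose (j+1) * (j+1) = (m+1).choose j * (m + 1 - j) :=
    Nat.choose_succ_right_eq (m+1) j
  have h2 : (m+1) * m.choose j = (m+1).choose (j+1) * (j+1) := by
    rw [← Nat.add_one_mul_choose_eq]
  simp only [Nat.add_sub_cancel]
  rw [h2, h1]
  exact Nat.mul_comm _ _

lemma deriv_step (s : Multiset ℝ) (hn : Multiset.card s ≠ 0) :
    ∃ t : Multiset ℝ, Multiset.card t = Multiset.card s - 1 ∧
      ∀ j ≤ Multiset.card s - 1,
        (Multiset.card s : ℝ) * t.esymm j = ((Multiset.card s - j : ℕ) : ℝ) * s.esymm j := by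
  set n := Multiset.card s with hns
  set P : ℝ[X] := (s.map fun a => X + C a).prod with hP
  have hPdef : P = ((s.map Neg.neg).map fun a => X - C a).prod := by
    rw [hP, Multiset.map_map]
    congr 1
    apply Multiset.map_congr rfl
    intro x _
    simp [sub_neg_eq_add]
  have hroots : P.roots = s.map Neg.neg := by
    rw [hPdef, roots_multiset_prod_X_sub_C]
  have hrcard : Multiset.card P.roots = n := by rw [hroots, Multiset.card_map]
  have hPdeg : P.natDegree = n := by
    rw [hPdef, natDegree_multiset_prod_X_sub_C_eq_card, Multiset.card_map]
  have hPmonic : P.Monic := by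
    rw [hP]
    apply monic_multiset_prod_of_monic
    intro a _
    exact monic_X_add_C a
  set Q : ℝ[X] := derivative P with hQ
  -- coefficient of Q at n-1
  have hQtop : Q.coeff (n-1) = (n : ℝ) := by
    rw [hQ, coeff_derivative]
    have : n - 1 + 1 = n := by omega
    rw [this]
    rw [show P.coeff n = 1 by rw [← hPdeg]; exact hPmonic.coeff_natDegree]
    rw [Nat.cast_sub (by omega : 1 ≤ n)]
    push_cast
    ring
  have hQdeg : Q.natDegree = n - 1 := by
    apply le_antisymm
    · rw [hQ]; exact (natDegree_derivative_le P).trans (by omega)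
    · apply le_natDegree_of_ne_zero
      rw [hQtop]
      exact_mod_cast hn
  have hQroots_card : Multiset.card Q.roots = n - 1 := by
    have h1 : Multiset.card Q.roots ≤ n - 1 := hQdeg ▸ Q.card_roots'
    have h2 := P.card_roots_le_derivative
    rw [hrcard, ← hQ] at h2
    omega
  have hQlead : Q.leadingCoeff = (n : ℝ) := by
    rw [leadingCoeff, hQdeg, hQtop]
  have hQfact : C (n : ℝ) * (Q.roots.map fun a => X - C a).prod = Q := by
    rw [← hQlead]
    exact C_leadingCoeff_mul_prod_multiset_X_sub_C (by rw [hQroots_card, hQdeg])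
  refine ⟨Q.roots.map Neg.neg, by rw [Multiset.card_map, hQroots_card], ?_⟩
  intro j hj
  set t := Q.roots.map Neg.neg with ht
  have htcard : Multiset.card t = n - 1 := by rw [ht, Multiset.card_map, hQroots_card]
  have hfact2 : Q = C (n:ℝ) * (t.map fun a => X + C a).prod := by
    rw [← hQfact, ht, Multiset.map_map]
    congr 2
    apply Multiset.map_congr rfl
    intro x _
    simp [sub_eq_add_neg]
  -- compute coeff of Q at n-1-j two ways
  have hc1 : Q.coeff (n-1-j) = (n:ℝ) * t.esymm j := by
    rw [hfact2, coeff_C_mul, Multiset.prod_X_add_C_coeff t (by omega : n-1-j ≤ Multiset.card t)]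
    congr 2
    omega
  have hc2 : Q.coeff (n-1-j) = s.esymm j * ((n - j : ℕ) : ℝ) := by
    rw [hQ, coeff_derivative]
    have he : n - 1 - j + 1 = n - j := by omega
    rw [he]
    rw [Multiset.prod_X_add_C_coeff s (by omega : n - j ≤ Multiset.card s)]
    congr 2
    · omega
    · push_cast [he.symm]
      norm_cast
  rw [← hc1, hc2]
  ring



/-- normalized elementary symmetric mean -/
noncomputable def mE (s : Multiset ℝ) (j : ℕ) : ℝ :=
  s.esymm j / ((Multiset.card s).choose j : ℝ)

lemma E_step (s : Multiset ℝ) (hn : Multiset.card s ≠ 0) :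
    ∃ t : Multiset ℝ, Multiset.card t = Multiset.card s - 1 ∧
      ∀ j ≤ Multiset.card s - 1, mE t j = mE s j := by
  obtain ⟨t, htc, hte⟩ := deriv_step s hn
  refine ⟨t, htc, ?_⟩
  intro j hj
  set n := Multiset.card s with hns
  have hcid : ((n - j : ℕ) : ℝ) * ((n.choose j : ℕ) : ℝ) = (n : ℝ) * (((n-1).choose j : ℕ) : ℝ) := by
    exact_mod_cast congrArg (Nat.cast : ℕ → ℝ) (choose_id n j (by omega))
  have hch1 : (0:ℝ) < ((n-1).choose j : ℝ) := by
    exact_mod_cast Nat.choose_pos (by omega : j ≤ n - 1)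
  have hch2 : (0:ℝ) < (n.choose j : ℝ) := by
    exact_mod_cast Nat.choose_pos (by omega : j ≤ n)
  rw [mE, mE, htc, ← hns]
  rw [div_eq_div_iff hch1.ne' hch2.ne']
  have key := hte j hj
  have hn0 : (n:ℝ) ≠ 0 := by exact_mod_cast hn
  apply mul_left_cancel₀ hn0
  calc (n:ℝ) * (t.esymm j * (n.choose j : ℝ)) = ((n:ℝ) * t.esymm j) * (n.choose j : ℝ) := by ring
    _ = ((n - j : ℕ) : ℝ) * s.esymm j * (n.choose j : ℝ) := by rw [key]
    _ = s.esymm j * (((n - j : ℕ) : ℝ) * ((n.choose j : ℕ) : ℝ)) := by ring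
    _ = s.esymm j * ((n : ℝ) * (((n-1).choose j : ℕ) : ℝ)) := by rw [hcid]
    _ = (n:ℝ) * (s.esymm j * ((n-1).choose j : ℝ)) := by ring


lemma choose_two (m : ℕ) : 2 * (m+2).choose 2 = (m+2) * (m+1) := by
  have h2 : (m+2) * ((m+1).choose 1) = (m+2).choose 2 * 2 := by
    simpa using Nat.add_one_mul_choose_eq (m+1) 1
  rw [Nat.choose_one_right] at h2
  omega

lemma newton_top (s : Multiset ℝ) (i : ℕ) (hcard : Multiset.card s = i + 2) :
    mE s i * mE s (i+2) ≤ mE s (i+1) ^ 2 := by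
  by_cases hp : s.prod = 0
  · have hz : mE s (i+2) = 0 := by
      rw [mE, hcard, Nat.choose_self, ← hcard, esymm_card, hp]
      simp
    rw [hz, mul_zero]
    positivity
  · have h0 : (0:ℝ) ∉ s := fun h => hp (Multiset.prod_eq_zero h)
    have hrev := esymm_inv s h0
    set t := s.map Inv.inv with htdef
    have htc : Multiset.card t = i + 2 := by rw [htdef, Multiset.card_map, hcard]
    have h2 : t.esymm 2 * s.prod = s.esymm i := by
      have h := hrev 2 (by omega)
      rwa [hcard, show i+2-2 = i from by omega] at h
    have h1 : t.sum * s.prod = s.esymm (i+1) := by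
      have h := hrev 1 (by omega)
      rwa [hcard, show i+2-1 = i+1 from by omega, esymm_one'] at h
    have hC2 : 2 * (((i+2).choose 2 : ℕ) : ℝ) = ((i:ℝ)+2)*((i:ℝ)+1) := by
      exact_mod_cast choose_two i
    have hCS := cs_ineq t
    rw [htc] at hCS
    push_cast at hCS
    have hid := sq_sum_eq t
    set S := t.sum with hS
    set Q := (t.map (fun x => x^2)).sum with hQ
    set e2 := t.esymm 2 with he2
    set C := (((i+2).choose 2 : ℕ) : ℝ) with hCdef
    have hchoosepos : (0:ℝ) < C := by
      rw [hCdef]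
      exact_mod_cast Nat.choose_pos (by omega : 2 ≤ i + 2)
    have hpr2 : (0:ℝ) < s.prod ^ 2 := by positivity
    have hEi : mE s i = e2 * s.prod / C := by
      rw [mE, hcard, ← h2]
      congr 2
      rw [← Nat.choose_symm (by omega : 2 ≤ i+2), Nat.add_sub_cancel]
    have hEi1 : mE s (i+1) = S * s.prod / ((i:ℝ)+2) := by
      rw [mE, hcard, ← h1]
      congr 1
      have hcc : (i+2).choose (i+1) = i+2 := by
        rw [show i+1 = (i+2) - 1 from by omega, Nat.choose_symm (by omega : 1 ≤ i+2),
          Nat.choose_one_right]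
      rw [hcc]
      push_cast
      ring
    have hEi2 : mE s (i+2) = s.prod := by
      rw [mE, hcard, Nat.choose_self, ← hcard, esymm_card]
      simp
    rw [hEi, hEi1, hEi2]
    have hidentity : 2*(C*S^2 - e2*((i:ℝ)+2)^2) = ((i:ℝ)+2)*(((i:ℝ)+2)*Q - S^2) := by
      linear_combination S^2 * hC2 + ((i:ℝ)+2)^2 * hid
    have hfac : (0:ℝ) ≤ ((i:ℝ)+2) * (((i:ℝ)+2)*Q - S^2) :=
      mul_nonneg (by positivity) (by linarith)
    have key : e2 * ((i:ℝ)+2)^2 ≤ C * S^2 := by linarith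
    rw [div_pow, div_mul_eq_mul_div, div_le_div_iff₀ hchoosepos (by positivity)]
    nlinarith [mul_le_mul_of_nonneg_right key (le_of_lt hpr2), hpr2]

lemma newton_ms (m : ℕ) : ∀ s : Multiset ℝ, Multiset.card s = m →
    ∀ i : ℕ, i + 2 ≤ m → mE s i * mE s (i+2) ≤ mE s (i+1) ^ 2 := by
  induction m with
  | zero => intro s hs i hi; omega
  | succ m ih =>
      intro s hs i hi
      rcases eq_or_lt_of_le hi with heq | hlt
      · exact newton_top s i (by omega)
      · obtain ⟨t, htc, hte⟩ := E_step s (by omega)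
        rw [hs] at htc hte
        simp only [Nat.add_sub_cancel] at htc hte
        have h0 := hte i (by omega)
        have h1 := hte (i+1) (by omega)
        have h2 := hte (i+2) (by omega)
        rw [← h0, ← h1, ← h2]
        exact ih t htc i (by omega)


lemma maclaurinA (p : ℕ → ℝ) (K : ℕ) (hp0 : p 0 = 1) (hpos : ∀ j ≤ K, 0 < p j)
    (hN : ∀ i, i + 2 ≤ K → p i * p (i+2) ≤ p (i+1) ^ 2) :
    ∀ i, i + 1 ≤ K → p (i+1) ^ i ≤ p i ^ (i+1) := by
  intro i
  induction i with
  | zero => intro _; simp [hp0]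
  | succ i ih =>
      intro hi
      have hIH := ih (by omega)
      have hNi := hN i hi
      have pos0 : 0 < p i := hpos i (by omega)
      have pos1 : 0 < p (i+1) := hpos (i+1) (by omega)
      have pos2 : 0 < p (i+2) := hpos (i+2) (by omega)
      have key : p (i+2) ^ (i+1) * p (i+1) ^ i ≤ p (i+1) ^ (i+2) * p (i+1) ^ i := by
        calc p (i+2) ^ (i+1) * p (i+1) ^ i
            ≤ p (i+2) ^ (i+1) * p i ^ (i+1) :=
              mul_le_mul_of_nonneg_left hIH (pow_nonneg pos2.le _)
          _ = (p i * p (i+2)) ^ (i+1) := by rw [mul_pow]; ring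
          _ ≤ (p (i+1) ^ 2) ^ (i+1) :=
              pow_le_pow_left₀ (mul_nonneg pos0.le pos2.le) hNi _
          _ = p (i+1) ^ (i+2) * p (i+1) ^ i := by
              rw [← pow_mul, ← pow_add]
              congr 1
              omega
      exact le_of_mul_le_mul_right key (pow_pos pos1 i)

lemma maclaurinB (p : ℕ → ℝ) (K : ℕ) (hp0 : p 0 = 1) (hpos : ∀ j ≤ K, 0 < p j)
    (hN : ∀ i, i + 2 ≤ K → p i * p (i+2) ≤ p (i+1) ^ 2) :
    ∀ l k : ℕ, 1 ≤ l → l ≤ k → k ≤ K → p k ^ l ≤ p l ^ k := by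
  intro l k hl hlk
  induction k, hlk using Nat.le_induction with
  | base => intro _; exact le_rfl
  | succ k hlk ih =>
      intro hkK
      have ihk : p k ^ l ≤ p l ^ k := ih (by omega)
      have hA : p (k+1) ^ k ≤ p k ^ (k+1) := maclaurinA p K hp0 hpos hN k (by omega)
      have posk1 : 0 < p (k+1) := hpos (k+1) (by omega)
      have posk : 0 < p k := hpos k (by omega)
      have posl : 0 < p l := hpos l (by omega)
      have hkne : k ≠ 0 := by omega
      have key : (p (k+1) ^ l) ^ k ≤ (p l ^ (k+1)) ^ k := by
        calc (p (k+1) ^ l) ^ k = (p (k+1) ^ k) ^ l := by rw [← pow_mul, ← pow_mul, Nat.mul_comm]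
          _ ≤ (p k ^ (k+1)) ^ l := pow_le_pow_left₀ (pow_nonneg posk1.le _) hA _
          _ = (p k ^ l) ^ (k+1) := by rw [← pow_mul, ← pow_mul, Nat.mul_comm]
          _ ≤ (p l ^ k) ^ (k+1) := pow_le_pow_left₀ (pow_nonneg posk.le _) ihk _
          _ = (p l ^ (k+1)) ^ k := by rw [← pow_mul, ← pow_mul, Nat.mul_comm]
      exact (pow_le_pow_iff_left₀ (pow_nonneg posk1.le _) (pow_nonneg posl.le _) hkne).mp key

lemma rpow_final {a b : ℝ} {k l : ℕ} (ha : 0 < a) (hb : 0 < b) (hl : l ≠ 0) (hk : k ≠ 0)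
    (h : a ^ l ≤ b ^ k) : a ^ ((1:ℝ)/(k:ℝ)) ≤ b ^ ((1:ℝ)/(l:ℝ)) := by
  have hkr : (0:ℝ) < (k:ℝ) := by exact_mod_cast Nat.pos_of_ne_zero hk
  have hlr : (0:ℝ) < (l:ℝ) := by exact_mod_cast Nat.pos_of_ne_zero hl
  have h1 : a ^ ((1:ℝ)/(k:ℝ)) = (a ^ l) ^ ((1:ℝ)/((k:ℝ)*(l:ℝ))) := by
    rw [← Real.rpow_natCast a l, ← Real.rpow_mul ha.le]
    congr 1
    field_simp
  have h2 : b ^ ((1:ℝ)/(l:ℝ)) = (b ^ k) ^ ((1:ℝ)/((k:ℝ)*(l:ℝ))) := by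
    rw [← Real.rpow_natCast b k, ← Real.rpow_mul hb.le]
    congr 1
    field_simp
  rw [h1, h2]
  exact Real.rpow_le_rpow (pow_nonneg ha.le _) h (by positivity)


end NM

noncomputable def esymmFin (m k : ℕ) (l : Fin m → ℝ) : ℝ :=
  ∑ s ∈ Finset.powersetCard k (Finset.univ : Finset (Fin m)), ∏ i ∈ s, l i

/-- Newton–Maclaurin inequality: for λ in the Garding cone Γ_k and 1 ≤ l ≤ k ≤ n-1,
(σ_k(λ)/C(n-1,k))^{1/k} ≤ (σ_l(λ)/C(n-1,l))^{1/l}. -/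
theorem newton_maclaurin (n k l : ℕ) (hl : 1 ≤ l) (hlk : l ≤ k) (hk : k ≤ n - 1)
    (lam : Fin (n - 1) → ℝ)
    (hGamma : ∀ i : ℕ, 1 ≤ i → i ≤ k → 0 < esymmFin (n - 1) i lam) :
    (esymmFin (n - 1) k lam / (Nat.choose (n - 1) k : ℝ)) ^ ((1 : ℝ) / k) ≤
      (esymmFin (n - 1) l lam / (Nat.choose (n - 1) l : ℝ)) ^ ((1 : ℝ) / l) := by
  set s : Multiset ℝ := (Finset.univ.val : Multiset (Fin (n-1))).map lam with hs
  have hcards : Multiset.card s = n - 1 := by simp [hs]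
  have hesymm : ∀ j, s.esymm j = esymmFin (n-1) j lam := by
    intro j
    rw [hs, Finset.esymm_map_val]
    rfl
  have hmE : ∀ j, NM.mE s j = esymmFin (n-1) j lam / (((n-1).choose j : ℕ) : ℝ) := by
    intro j
    rw [NM.mE, hcards, hesymm]
  have hpos : ∀ j ≤ k, 0 < NM.mE s j := by
    intro j hj
    rcases Nat.eq_zero_or_pos j with rfl | hj1
    · rw [NM.mE, NM.esymm_zero', hcards, Nat.choose_zero_right]
      norm_num
    · rw [hmE]
      apply div_pos (hGamma j hj1 hj)
      exact_mod_cast Nat.choose_pos (by omega : j ≤ n - 1)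
  have hN : ∀ i, i + 2 ≤ k → NM.mE s i * NM.mE s (i+2) ≤ NM.mE s (i+1) ^ 2 := by
    intro i hi
    exact NM.newton_ms (n-1) s hcards i (by omega)
  have hp0 : NM.mE s 0 = 1 := by
    rw [NM.mE, NM.esymm_zero', hcards, Nat.choose_zero_right]
    norm_num
  have hB := NM.maclaurinB (NM.mE s) k hp0 hpos hN l k hl hlk le_rfl
  have hfin := NM.rpow_final (hpos k le_rfl) (hpos l (by omega)) (by omega) (by omega) hB
  rw [hmE k, hmE l] at hfin
  exact hfin
end

section
/- The Garding cone Γ_k = {λ ∈ ℝ^{n-1} : σ_i(λ) > 0 for all 1 ≤ i ≤ k} is a convex cone: it is closed under addition and under multiplication by positive scalars. -/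
namespace GardingAux

open Polynomial Finset

variable {m k : ℕ}

lemma esymmFin_smul (m i : ℕ) (c : ℝ) (l : Fin m → ℝ) :
    esymmFin m i (c • l) = c ^ i * esymmFin m i l := by
  unfold esymmFin
  rw [Finset.mul_sum]
  refine Finset.sum_congr rfl fun s hs => ?_
  rw [Finset.mem_powersetCard] at hs
  simp only [Pi.smul_apply, smul_eq_mul]
  rw [Finset.prod_mul_distrib, Finset.prod_const, hs.2]

lemma esymmFin_zero_of_gt {i : ℕ} (h : m < i) (l : Fin m → ℝ) : esymmFin m i l = 0 := by
  unfold esymmFin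
  rw [Finset.powersetCard_eq_empty.mpr (by simpa using h), Finset.sum_empty]

lemma esymmFin_zero (l : Fin m → ℝ) : esymmFin m 0 l = 1 := by
  simp [esymmFin]

lemma esymmFin_one (m i : ℕ) : esymmFin m i (fun _ => (1:ℝ)) = (m.choose i : ℝ) := by
  simp [esymmFin, Finset.card_powersetCard]

/-- the product polynomial with roots `-x i` -/
noncomputable def Qp (m : ℕ) (x : Fin m → ℝ) : ℝ[X] := ∏ i : Fin m, (X + C (x i))

lemma Qp_monic (x : Fin m → ℝ) : (Qp m x).Monic :=
  monic_prod_of_monic _ _ fun i _ => monic_X_add_C _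

lemma Qp_natDegree (x : Fin m → ℝ) : (Qp m x).natDegree = m := by
  rw [Qp, natDegree_prod_of_monic _ _ fun i _ => monic_X_add_C _]
  simp

lemma Qp_coeff {j : ℕ} (hj : j ≤ m) (x : Fin m → ℝ) :
    (Qp m x).coeff (m - j) = esymmFin m j x := by
  rw [Qp, Finset.prod_X_add_C_coeff univ x (k := m - j) (by simp)]
  unfold esymmFin
  congr 2
  rw [Finset.card_univ, Fintype.card_fin, Nat.sub_sub_self hj]

/-- the polynomial `t ↦ σ_k(x + t·e)` -/
noncomputable def Pke (m k : ℕ) (x : Fin m → ℝ) : ℝ[X] := hasseDeriv (m - k) (Qp m x)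

lemma Pke_coeff {j : ℕ} (hk : k ≤ m) (hj : j ≤ k) (x : Fin m → ℝ) :
    (Pke m k x).coeff j = ((j + (m - k)).choose (m - k) : ℝ) * esymmFin m (k - j) x := by
  rw [Pke, hasseDeriv_coeff]
  have h1 : j + (m - k) = m - (k - j) := by omega
  rw [h1, Qp_coeff (by omega)]

lemma Pke_coeff_of_gt {j : ℕ} (hk : k ≤ m) (hj : k < j) (x : Fin m → ℝ) :
    (Pke m k x).coeff j = 0 := by
  rw [Pke, hasseDeriv_coeff]
  rw [coeff_eq_zero_of_natDegree_lt (by rw [Qp_natDegree]; omega), mul_zero]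

lemma Pke_coeff_k (hk : k ≤ m) (x : Fin m → ℝ) :
    (Pke m k x).coeff k = (m.choose (m - k) : ℝ) := by
  rw [Pke_coeff hk le_rfl, Nat.sub_self, esymmFin_zero, mul_one]
  congr 2
  omega

lemma Pke_natDegree (hk : k ≤ m) (x : Fin m → ℝ) : (Pke m k x).natDegree = k := by
  have h1 : (Pke m k x).natDegree ≤ k :=
    natDegree_le_iff_coeff_eq_zero.mpr fun j hj => Pke_coeff_of_gt hk hj x
  have h2 : (Pke m k x).coeff k ≠ 0 := by
    rw [Pke_coeff_k hk]
    exact Nat.cast_ne_zero.mpr (Nat.choose_pos (Nat.sub_le m k)).ne'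
  exact le_antisymm h1 (le_natDegree_of_ne_zero h2)


/-- "real-rooted": splits over ℝ -/
lemma card_roots_eq_natDegree_derivative {p : ℝ[X]}
    (hp : Multiset.card p.roots = p.natDegree) :
    Multiset.card (derivative p).roots = (derivative p).natDegree := by
  by_cases hd : p.natDegree = 0
  · have : derivative p = 0 := by
      have := natDegree_eq_zero.mp hd
      obtain ⟨a, rfl⟩ := this
      simp
    simp [this]
  · have h1 := p.card_roots_le_derivative
    have h2 := natDegree_derivative_le p
    have h3 := (derivative p).card_roots'
    omega

lemma splits_derivative {p : ℝ[X]} (hp : p.Splits) :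
    (derivative p).Splits :=
  splits_iff_card_roots.mpr (card_roots_eq_natDegree_derivative (splits_iff_card_roots.mp hp))

lemma splits_iterate_derivative {p : ℝ[X]} (hp : p.Splits) (n : ℕ) :
    (derivative^[n] p).Splits := by
  induction n with
  | zero => exact hp
  | succ n ih => rw [Function.iterate_succ_apply']; exact splits_derivative ih

lemma hasseDeriv_eq_smul (n : ℕ) (p : ℝ[X]) :
    derivative^[n] p = (n.factorial : ℝ) • hasseDeriv n p := by
  have := congrFun (factorial_smul_hasseDeriv (R := ℝ) (k := n)) p
  rw [← this]
  simp [Nat.cast_smul_eq_nsmul]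

lemma splits_hasseDeriv {p : ℝ[X]} (hp : p.Splits) (n : ℕ) :
    (hasseDeriv n p).Splits := by
  have h := splits_iterate_derivative hp n
  rw [hasseDeriv_eq_smul] at h
  have hf : (n.factorial : ℝ) ≠ 0 := Nat.cast_ne_zero.mpr n.factorial_ne_zero
  rcases eq_or_ne (hasseDeriv n p) 0 with h0 | h0
  · rw [h0]; exact Splits.zero
  · rw [splits_iff_card_roots] at h ⊢
    rw [roots_smul_nonzero _ hf, smul_eq_C_mul, natDegree_C_mul hf] at h
    exact h

lemma Qp_splits (x : Fin m → ℝ) : (Qp m x).Splits :=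
  Splits.prod fun i _ => Splits.of_natDegree_le_one (le_of_eq (natDegree_X_add_C _))

lemma Pke_splits (x : Fin m → ℝ) : (Pke m k x).Splits :=
  splits_hasseDeriv (Qp_splits x) _

/-- translation identity -/
lemma Qp_translate (x : Fin m → ℝ) (c : ℝ) :
    Qp m (fun i => x i + c) = taylor c (Qp m x) := by
  rw [taylor_apply, Qp, Qp]
  rw [Polynomial.prod_comp]
  refine Finset.prod_congr rfl fun i _ => ?_
  rw [add_comp, X_comp, C_comp, add_assoc, ← C_add, add_comm c (x _)]

lemma esymm_translate {j : ℕ} (hj : j ≤ m) (x : Fin m → ℝ) (c : ℝ) :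
    esymmFin m j (fun i => x i + c) = (Pke m j x).eval c := by
  rw [← Qp_coeff hj, Qp_translate, taylor_coeff, Pke]

/-- the Garding cone condition -/
def Cone (m k : ℕ) (x : Fin m → ℝ) : Prop := ∀ j : ℕ, 1 ≤ j → j ≤ k → 0 < esymmFin m j x

lemma cone_mono {k' : ℕ} (h : k' ≤ k) {x : Fin m → ℝ} (hx : Cone m k x) : Cone m k' x :=
  fun j h1 h2 => hx j h1 (h2.trans h)

lemma cone_e (hk : k ≤ m) : Cone m k (fun _ => (1:ℝ)) := by
  intro j _ hj
  rw [esymmFin_one]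
  exact_mod_cast Nat.choose_pos (hj.trans hk)

lemma cone_smul {x : Fin m → ℝ} (hx : Cone m k x) {c : ℝ} (hc : 0 < c) : Cone m k (c • x) := by
  intro j h1 h2
  rw [esymmFin_smul]
  exact mul_pos (pow_pos hc j) (hx j h1 h2)

lemma Pke_eval_pos (hk : k ≤ m) (hk1 : 1 ≤ k) {x : Fin m → ℝ} (hx : Cone m k x)
    {c : ℝ} (hc : 0 ≤ c) : 0 < (Pke m k x).eval c := by
  rw [eval_eq_sum_range, Pke_natDegree hk]
  refine Finset.sum_pos' (fun i hi => ?_) ⟨0, by simp, ?_⟩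
  · rw [Finset.mem_range] at hi
    have hik : i ≤ k := by omega
    rw [Pke_coeff hk hik]
    refine mul_nonneg (mul_nonneg (by positivity) ?_) (by positivity)
    rcases Nat.eq_or_lt_of_le hik with rfl | hlt
    · simp [esymmFin_zero]
    · exact (hx (k - i) (by omega) (by omega)).le
  · simp only [pow_zero, mul_one]
    rw [Pke_coeff hk (by omega), Nat.sub_zero]
    exact mul_pos (by exact_mod_cast Nat.choose_pos (by omega)) (hx k hk1 le_rfl)

lemma cone_translate (hk : k ≤ m) {x : Fin m → ℝ} (hx : Cone m k x)
    {c : ℝ} (hc : 0 ≤ c) : Cone m k (fun i => x i + c) := by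
  intro j h1 h2
  rw [esymm_translate (h2.trans hk)]
  exact Pke_eval_pos (h2.trans hk) h1 (cone_mono h2 hx) hc

lemma cone_segment (hk : k ≤ m) {x : Fin m → ℝ} (hx : Cone m k x) {s : ℝ}
    (h0 : 0 ≤ s) (h1 : s ≤ 1) : Cone m k (fun i => (1 - s) * x i + s) := by
  rcases eq_or_lt_of_le h1 with rfl | hlt
  · simpa using cone_e hk
  · have hpos : 0 < 1 - s := by linarith
    have key : (fun i => (1 - s) * x i + s) = (1 - s) • (fun i => x i + s / (1 - s)) := by
      funext i
      simp only [Pi.smul_apply, smul_eq_mul]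
      field_simp
    rw [key]
    exact cone_smul (cone_translate hk hx (by positivity)) hpos


/-- the polynomial `t ↦ σ_k(a + t·b)` over any commutative ring -/
noncomputable def Fp (R : Type*) [CommRing R] (m k : ℕ) (a b : Fin m → R) : R[X] :=
  ∑ S ∈ powersetCard k (univ : Finset (Fin m)), ∏ i ∈ S, (C (a i) + C (b i) * X)

lemma Fp_eval {R : Type*} [CommRing R] (a b : Fin m → R) (t : R) :
    (Fp R m k a b).eval t =
      ∑ S ∈ powersetCard k (univ : Finset (Fin m)), ∏ i ∈ S, (a i + b i * t) := by
  simp [Fp, eval_finset_sum, eval_prod]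

lemma Fp_eval_real (x l : Fin m → ℝ) (t : ℝ) :
    (Fp ℝ m k x l).eval t = esymmFin m k (fun i => x i + l i * t) := by
  rw [Fp_eval]; rfl

lemma Fp_map {R S : Type*} [CommRing R] [CommRing S] (f : R →+* S) (a b : Fin m → R) :
    (Fp R m k a b).map f = Fp S m k (f ∘ a) (f ∘ b) := by
  simp only [Fp, Polynomial.map_sum, Polynomial.map_prod, Polynomial.map_add,
    Polynomial.map_mul, map_C, map_X]
  rfl

lemma Fp_eq_sum {R : Type*} [CommRing R] (a b : Fin m → R) :
    Fp R m k a b = ∑ S ∈ powersetCard k (univ : Finset (Fin m)), ∑ T ∈ S.powerset,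
      C ((∏ i ∈ T, b i) * ∏ i ∈ S \ T, a i) * X ^ (#T) := by
  unfold Fp
  refine Finset.sum_congr rfl fun S _ => ?_
  have hcomm : ∀ i ∈ S, C (a i) + C (b i) * X = (C (b i) * X) + C (a i) :=
    fun i _ => add_comm _ _
  rw [Finset.prod_congr rfl hcomm, Finset.prod_add]
  refine Finset.sum_congr rfl fun T _ => ?_
  rw [Finset.prod_mul_distrib, Finset.prod_const, ← map_prod C b T, ← map_prod C a (S \ T)]
  rw [mul_comm (C (∏ i ∈ T, b i)) (X ^ (#T)), mul_assoc, ← C_mul, mul_comm (X ^ (#T))]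

lemma Fp_coeff {R : Type*} [CommRing R] (a b : Fin m → R) (j : ℕ) :
    (Fp R m k a b).coeff j = ∑ S ∈ powersetCard k (univ : Finset (Fin m)),
      ∑ T ∈ S.powersetCard j, (∏ i ∈ T, b i) * ∏ i ∈ S \ T, a i := by
  rw [Fp_eq_sum, finset_sum_coeff]
  refine Finset.sum_congr rfl fun S _ => ?_
  rw [finset_sum_coeff, Finset.powersetCard_eq_filter, Finset.sum_filter]
  refine Finset.sum_congr rfl fun T _ => ?_
  rw [coeff_C_mul, coeff_X_pow]
  by_cases h : (#T) = j
  · simp [h]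
  · simp [h, Ne.symm h]

lemma Fp_coeff_k {R : Type*} [CommRing R] (a b : Fin m → R) :
    (Fp R m k a b).coeff k = ∑ S ∈ powersetCard k (univ : Finset (Fin m)), ∏ i ∈ S, b i := by
  rw [Fp_coeff]
  refine Finset.sum_congr rfl fun S hS => ?_
  have hcard : (#S) = k := (Finset.mem_powersetCard.mp hS).2
  rw [← hcard, Finset.powersetCard_self, Finset.sum_singleton, Finset.sdiff_self,
    Finset.prod_empty, mul_one]

lemma Fp_coeff_of_gt {R : Type*} [CommRing R] (a b : Fin m → R) {j : ℕ} (hj : k < j) :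
    (Fp R m k a b).coeff j = 0 := by
  rw [Fp_coeff]
  refine Finset.sum_eq_zero fun S hS => ?_
  have hcard : (#S) = k := (Finset.mem_powersetCard.mp hS).2
  rw [Finset.powersetCard_eq_empty.mpr (by omega), Finset.sum_empty]

lemma Fp_natDegree_le {R : Type*} [CommRing R] (a b : Fin m → R) :
    (Fp R m k a b).natDegree ≤ k :=
  natDegree_le_iff_coeff_eq_zero.mpr fun _ hj => Fp_coeff_of_gt a b hj

lemma Fp_coeff_k_real (x l : Fin m → ℝ) : (Fp ℝ m k x l).coeff k = esymmFin m k l :=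
  Fp_coeff_k x l

lemma Fp_natDegree_real {x l : Fin m → ℝ} (h : esymmFin m k l ≠ 0) :
    (Fp ℝ m k x l).natDegree = k :=
  le_antisymm (Fp_natDegree_le x l)
    (le_natDegree_of_ne_zero (by rwa [Fp_coeff_k_real]))

lemma Fp_e_eq_Pke (hk : k ≤ m) (x : Fin m → ℝ) :
    Fp ℝ m k x (fun _ => 1) = Pke m k x := by
  apply Polynomial.funext
  intro t
  rw [Fp_eval_real]
  simp only [one_mul]
  exact esymm_translate hk x t



/-! ### Complex root machinery -/

noncomputable def Complex.abs : AbsoluteValue ℂ ℝ where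
  toFun z := ‖z‖
  map_mul' := norm_mul
  nonneg' := norm_nonneg
  eq_zero' _ := norm_eq_zero
  add_le' := norm_add_le

@[simp] lemma Complex.abs_apply (z : ℂ) : Complex.abs z = ‖z‖ := rfl

lemma Complex.continuous_abs : Continuous fun z : ℂ => Complex.abs z := continuous_norm

lemma Complex.norm_eq_abs (z : ℂ) : ‖z‖ = Complex.abs z := rfl

lemma abs_root_le {p : ℂ[X]} (hp : p ≠ 0) {z : ℂ} (hz : p.IsRoot z) :
    Complex.abs z ≤ 1 + (∑ j ∈ Finset.range p.natDegree, Complex.abs (p.coeff j)) /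
      Complex.abs p.leadingCoeff := by
  set d := p.natDegree with hd
  set A := ∑ j ∈ Finset.range d, Complex.abs (p.coeff j) with hA
  set L := Complex.abs p.leadingCoeff with hL
  have hL0 : 0 < L := AbsoluteValue.pos _ (leadingCoeff_ne_zero.mpr hp)
  have hA0 : 0 ≤ A := Finset.sum_nonneg fun _ _ => AbsoluteValue.nonneg _ _
  have hAL : 0 ≤ A / L := div_nonneg hA0 hL0.le
  rcases le_or_gt (Complex.abs z) 1 with h | h
  · linarith
  · have hd1 : 1 ≤ d := by
      by_contra hd0
      have hdz : d = 0 := by omega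
      have := hz
      rw [IsRoot, eval_eq_sum_range] at this
      rw [← hd, hdz] at this
      simp only [zero_add, Finset.range_one, Finset.sum_singleton, pow_zero, mul_one] at this
      exact leadingCoeff_ne_zero.mpr hp (by rwa [leadingCoeff, ← hd, hdz])
    have heval : (0:ℂ) = ∑ i ∈ Finset.range d, p.coeff i * z ^ i + p.leadingCoeff * z ^ d := by
      have := hz
      rw [IsRoot, eval_eq_sum_range, ← hd, Finset.sum_range_succ] at this
      rw [← this, leadingCoeff, ← hd]
    have hkey : L * Complex.abs z ^ d ≤ A * Complex.abs z ^ (d - 1) := by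
      have h1 : Complex.abs (p.leadingCoeff * z ^ d) =
          Complex.abs (∑ i ∈ Finset.range d, p.coeff i * z ^ i) := by
        have : p.leadingCoeff * z ^ d = -(∑ i ∈ Finset.range d, p.coeff i * z ^ i) := by
          linear_combination -heval
        rw [this, map_neg_eq_map]
      rw [map_mul, map_pow] at h1
      calc L * Complex.abs z ^ d = Complex.abs (∑ i ∈ Finset.range d, p.coeff i * z ^ i) := h1
        _ ≤ ∑ i ∈ Finset.range d, Complex.abs (p.coeff i * z ^ i) :=
            (Complex.abs.sum_le _ _)
        _ ≤ ∑ i ∈ Finset.range d, Complex.abs (p.coeff i) * Complex.abs z ^ (d - 1) := by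
            refine Finset.sum_le_sum fun i hi => ?_
            rw [map_mul, map_pow]
            refine mul_le_mul_of_nonneg_left ?_ (AbsoluteValue.nonneg _ _)
            exact pow_le_pow_right₀ (by linarith) (by
              have := Finset.mem_range.mp hi; omega)
        _ = A * Complex.abs z ^ (d - 1) := by rw [← Finset.sum_mul]
    have hzpow : Complex.abs z ^ d = Complex.abs z ^ (d - 1) * Complex.abs z := by
      conv_lhs => rw [show d = (d - 1) + 1 by omega]
      rw [pow_succ]
    have hpowpos : 0 < Complex.abs z ^ (d - 1) := by positivity
    have : L * Complex.abs z ≤ A := by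
      rw [hzpow] at hkey
      nlinarith
    have : Complex.abs z ≤ A / L := (le_div_iff₀ hL0).mpr (by linarith)
    linarith

lemma multiset_pow_lt_prod {s : Multiset ℝ} (hs : s ≠ 0) {B : ℝ} (hB : 0 ≤ B)
    (h : ∀ a ∈ s, B < a) : B ^ (Multiset.card s) < s.prod := by
  induction s using Multiset.induction with
  | empty => simp at hs
  | cons a s ih =>
    have ha := h a (Multiset.mem_cons_self a s)
    rcases eq_or_ne s 0 with rfl | hs0
    · simpa using ha
    · have h1 := ih hs0 (fun b hb => h b (Multiset.mem_cons_of_mem hb))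
      have hprodpos : 0 < s.prod := lt_of_le_of_lt (by positivity) h1
      rw [Multiset.prod_cons, Multiset.card_cons, pow_succ]
      calc B ^ (Multiset.card s) * B ≤ B ^ (Multiset.card s) * a :=
            mul_le_mul_of_nonneg_left ha.le (pow_nonneg hB _)
        _ < s.prod * a := mul_lt_mul_of_pos_right h1 (lt_of_le_of_lt hB ha)
        _ = a * s.prod := mul_comm _ _

lemma abs_eval_eq {q : ℂ[X]} (hq : q ≠ 0) (z : ℂ) :
    Complex.abs (q.eval z) = Complex.abs q.leadingCoeff *
      (q.roots.map (fun r => Complex.abs (z - r))).prod := by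
  have hsplit : q.Splits := IsAlgClosed.splits q
  conv_lhs => rw [hsplit.eq_prod_roots]
  rw [eval_mul, eval_C, map_mul]
  congr 1
  rw [eval_multiset_prod, Multiset.map_map]
  have h1 : Multiset.map (eval z ∘ fun a => X - C a) q.roots =
      q.roots.map (fun a => z - a) := by
    refine Multiset.map_congr rfl fun a _ => ?_
    simp
  rw [h1, ← Multiset.prod_hom (q.roots.map fun a => z - a) Complex.abs, Multiset.map_map]
  rfl

lemma exists_root_near {q : ℂ[X]} (hq : q.natDegree ≠ 0) (z : ℂ) :
    ∃ r ∈ q.roots, Complex.abs (z - r) ^ q.natDegree ≤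
      Complex.abs (q.eval z) / Complex.abs q.leadingCoeff := by
  have hq0 : q ≠ 0 := fun h => hq (by simp [h])
  have hL0 : 0 < Complex.abs q.leadingCoeff :=
    AbsoluteValue.pos _ (leadingCoeff_ne_zero.mpr hq0)
  have hcard : Multiset.card q.roots = q.natDegree :=
    splits_iff_card_roots.mp (IsAlgClosed.splits q)
  by_contra hcon
  push_neg at hcon
  set B := Complex.abs (q.eval z) / Complex.abs q.leadingCoeff with hB
  have hB0 : 0 ≤ B := div_nonneg (AbsoluteValue.nonneg _ _) hL0.le
  have hne : (q.roots.map (fun r => Complex.abs (z - r) ^ q.natDegree)) ≠ 0 := by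
    rw [Ne, Multiset.map_eq_zero]
    intro h
    rw [h] at hcard
    simp at hcard
    omega
  have hlt : ∀ a ∈ q.roots.map (fun r => Complex.abs (z - r) ^ q.natDegree), B < a := by
    intro a ha
    obtain ⟨r, hr, rfl⟩ := Multiset.mem_map.mp ha
    exact hcon r hr
  have h1 := multiset_pow_lt_prod hne hB0 hlt
  have h2 : (q.roots.map (fun r => Complex.abs (z - r) ^ q.natDegree)).prod =
      ((q.roots.map (fun r => Complex.abs (z - r))).prod) ^ q.natDegree :=
    Multiset.prod_map_pow
  have h3 : ((q.roots.map (fun r => Complex.abs (z - r))).prod) = B := by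
    rw [hB, abs_eval_eq hq0 z, mul_comm, mul_div_assoc, div_self hL0.ne', mul_one]
  rw [h2, h3, Multiset.card_map, hcard] at h1
  exact lt_irrefl _ h1


open Filter Topology

lemma tendsto_of_pow_tendsto_zero {d : ℕ} (hd : d ≠ 0) {t : ℕ → ℝ} (ht : ∀ n, 0 ≤ t n)
    (h : Tendsto (fun n => t n ^ d) atTop (nhds 0)) : Tendsto t atTop (nhds 0) := by
  rw [Metric.tendsto_atTop] at h ⊢
  intro ε hε
  obtain ⟨N, hN⟩ := h (ε ^ d) (by positivity)
  refine ⟨N, fun n hn => ?_⟩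
  have h1 := hN n hn
  rw [Real.dist_eq, sub_zero, abs_of_nonneg (pow_nonneg (ht n) d)] at h1
  rw [Real.dist_eq, sub_zero, abs_of_nonneg (ht n)]
  by_contra hcon
  push_neg at hcon
  exact absurd h1 (not_lt.mpr (pow_le_pow_left₀ hε.le hcon d))

lemma tendsto_eval {d : ℕ} {q : ℕ → ℂ[X]} {q' : ℂ[X]}
    (hdeg : ∀ n, (q n).natDegree = d) (hdeg' : q'.natDegree = d)
    (hc : ∀ j, Tendsto (fun n => (q n).coeff j) atTop (nhds (q'.coeff j)))
    {z : ℕ → ℂ} {z' : ℂ} (hz : Tendsto z atTop (nhds z')) :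
    Tendsto (fun n => (q n).eval (z n)) atTop (nhds (q'.eval z')) := by
  have hrw : ∀ n, (q n).eval (z n) = ∑ j ∈ Finset.range (d+1), (q n).coeff j * (z n)^j := by
    intro n; rw [eval_eq_sum_range, hdeg n]
  rw [show q'.eval z' = ∑ j ∈ Finset.range (d+1), q'.coeff j * z'^j by
    rw [eval_eq_sum_range, hdeg']]
  simp only [hrw]
  exact tendsto_finset_sum _ fun j _ => (hc j).mul (hz.pow j)

lemma nonzero_of_deg {d : ℕ} (hd : d ≠ 0) {q : ℂ[X]} (hdeg : q.natDegree = d) : q ≠ 0 :=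
  fun h => hd (by rw [← hdeg, h, natDegree_zero])

lemma coeff_d_ne_zero {d : ℕ} (hd : d ≠ 0) {q : ℂ[X]} (hdeg : q.natDegree = d) :
    q.coeff d ≠ 0 := by
  rw [← hdeg]
  exact leadingCoeff_ne_zero.mpr (nonzero_of_deg hd hdeg)

/-- limits of roots are roots (after passing to a subsequence) -/
lemma exists_subseq_root_limit {d : ℕ} (hd : d ≠ 0) {q : ℕ → ℂ[X]} {q' : ℂ[X]}
    (hdeg : ∀ n, (q n).natDegree = d) (hdeg' : q'.natDegree = d)
    (hc : ∀ j, Tendsto (fun n => (q n).coeff j) atTop (nhds (q'.coeff j)))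
    {z : ℕ → ℂ} (hz : ∀ n, z n ∈ (q n).roots) :
    ∃ w ∈ q'.roots, ∃ ψ : ℕ → ℕ, StrictMono ψ ∧ Tendsto (z ∘ ψ) atTop (nhds w) := by
  have hq0 : ∀ n, q n ≠ 0 := fun n => nonzero_of_deg hd (hdeg n)
  have hroot : ∀ n, (q n).IsRoot (z n) := fun n => (mem_roots (hq0 n)).mp (hz n)
  have hlead : ∀ n, (q n).leadingCoeff = (q n).coeff d := fun n => by
    rw [leadingCoeff, hdeg n]
  set b : ℕ → ℝ := fun n => 1 + (∑ j ∈ Finset.range d, Complex.abs ((q n).coeff j)) /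
    Complex.abs ((q n).coeff d) with hb
  have hbound : ∀ n, Complex.abs (z n) ≤ b n := by
    intro n
    have := abs_root_le (hq0 n) (hroot n)
    rwa [hdeg n, hlead n] at this
  have hL' : q'.coeff d ≠ 0 := coeff_d_ne_zero hd hdeg'
  have hbtend : Tendsto b atTop (nhds (1 + (∑ j ∈ Finset.range d,
      Complex.abs (q'.coeff j)) / Complex.abs (q'.coeff d))) := by
    refine tendsto_const_nhds.add (Filter.Tendsto.div ?_ ?_ ?_)
    · exact tendsto_finset_sum _ fun j _ => (Complex.continuous_abs.tendsto _).comp (hc j)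
    · exact (Complex.continuous_abs.tendsto _).comp (hc d)
    · simpa using hL'
  obtain ⟨M, hM⟩ := hbtend.bddAbove_range
  have hzbdd : ∀ n, z n ∈ Metric.closedBall (0:ℂ) M := by
    intro n
    rw [Metric.mem_closedBall, dist_zero_right, Complex.norm_eq_abs]
    exact le_trans (hbound n) (hM (Set.mem_range_self n))
  obtain ⟨w, _, ψ, hψ, hwz⟩ := tendsto_subseq_of_bounded Metric.isBounded_closedBall hzbdd
  refine ⟨w, ?_, ψ, hψ, hwz⟩
  have heval : Tendsto (fun n => (q (ψ n)).eval (z (ψ n))) atTop (nhds (q'.eval w)) :=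
    tendsto_eval (fun n => hdeg (ψ n)) hdeg' (fun j => (hc j).comp hψ.tendsto_atTop) hwz
  have hz0 : (fun n => (q (ψ n)).eval (z (ψ n))) = fun _ => (0:ℂ) := by
    funext n; exact hroot (ψ n)
  rw [hz0] at heval
  have : q'.eval w = 0 := (tendsto_nhds_unique tendsto_const_nhds heval).symm
  exact (mem_roots (nonzero_of_deg hd hdeg')).mpr this

/-- roots of the limit polynomial are approximated by roots -/
lemma exists_roots_tendsto {d : ℕ} (hd : d ≠ 0) {q : ℕ → ℂ[X]} {q' : ℂ[X]}
    (hdeg : ∀ n, (q n).natDegree = d) (hdeg' : q'.natDegree = d)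
    (hc : ∀ j, Tendsto (fun n => (q n).coeff j) atTop (nhds (q'.coeff j)))
    {w : ℂ} (hw : q'.eval w = 0) :
    ∃ r : ℕ → ℂ, (∀ n, r n ∈ (q n).roots) ∧ Tendsto r atTop (nhds w) := by
  have hlead : ∀ n, (q n).leadingCoeff = (q n).coeff d := fun n => by
    rw [leadingCoeff, hdeg n]
  have h1 : ∀ n, ∃ r ∈ (q n).roots, Complex.abs (w - r) ^ d ≤
      Complex.abs ((q n).eval w) / Complex.abs ((q n).coeff d) := by
    intro n
    have := exists_root_near (q := q n) (by rw [hdeg n]; exact hd) w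
    rwa [hdeg n, hlead n] at this
  choose r hr hre using h1
  refine ⟨r, hr, ?_⟩
  have heval : Tendsto (fun n => (q n).eval w) atTop (nhds 0) := by
    rw [← hw]
    exact tendsto_eval hdeg hdeg' hc tendsto_const_nhds
  have hL' : q'.coeff d ≠ 0 := coeff_d_ne_zero hd hdeg'
  have hquot : Tendsto (fun n => Complex.abs ((q n).eval w) /
      Complex.abs ((q n).coeff d)) atTop (nhds 0) := by
    have := Filter.Tendsto.div ((Complex.continuous_abs.tendsto _).comp heval)
      ((Complex.continuous_abs.tendsto _).comp (hc d)) (by simpa using hL')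
    simpa [Function.comp_def, Pi.div_def] using this
  have habs : Tendsto (fun n => Complex.abs (w - r n)) atTop (nhds 0) := by
    refine tendsto_of_pow_tendsto_zero hd (fun n => AbsoluteValue.nonneg _ _) ?_
    exact squeeze_zero (fun n => by positivity) hre hquot
  rw [tendsto_iff_dist_tendsto_zero]
  have hfn : (fun n => dist (r n) w) = fun n => Complex.abs (w - r n) := by
    funext n
    rw [Complex.dist_eq, AbsoluteValue.map_sub]
    rfl
  rw [hfn]
  exact habs


/-- The main deformation lemma: if the roots of a continuous family of complex
polynomials of constant degree never touch the barrier `{φ = 0}`, and at `s = 1`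
all roots satisfy `φ < 0`, then the same holds at `s = 0`. -/
lemma conn {d : ℕ} (hd : d ≠ 0) (p : ℝ → ℂ[X]) (φ : ℂ → ℝ) (hφ : Continuous φ)
    (hdeg : ∀ s ∈ Set.Icc (0:ℝ) 1, (p s).natDegree = d)
    (hcont : ∀ j, Continuous fun s => (p s).coeff j)
    (hbar : ∀ s ∈ Set.Icc (0:ℝ) 1, ∀ z ∈ (p s).roots, φ z ≠ 0)
    (hone : ∀ z ∈ (p 1).roots, φ z < 0) :
    ∀ z ∈ (p 0).roots, φ z < 0 := by
  by_contra hcon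
  push_neg at hcon
  obtain ⟨z0, hz0, hφz0⟩ := hcon
  have h01 : (0:ℝ) ∈ Set.Icc (0:ℝ) 1 := by constructor <;> norm_num
  have h11 : (1:ℝ) ∈ Set.Icc (0:ℝ) 1 := by constructor <;> norm_num
  have hφz0' : 0 < φ z0 := lt_of_le_of_ne hφz0 (Ne.symm (hbar 0 h01 z0 hz0))
  set S : Set ℝ := {s | s ∈ Set.Icc (0:ℝ) 1 ∧ ∃ z ∈ (p s).roots, 0 < φ z} with hS
  have h0S : (0:ℝ) ∈ S := ⟨h01, z0, hz0, hφz0'⟩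
  have hbdd : BddAbove S := ⟨1, fun s hs => hs.1.2⟩
  set t := sSup S with ht
  have ht0 : 0 ≤ t := le_csSup hbdd h0S
  have ht1 : t ≤ 1 := csSup_le ⟨0, h0S⟩ (fun s hs => hs.1.2)
  have htmem : t ∈ Set.Icc (0:ℝ) 1 := ⟨ht0, ht1⟩
  have key : ∀ (u : ℕ → ℝ), (∀ n, u n ∈ S) → Tendsto u atTop (nhds t) →
      ∃ z ∈ (p t).roots, 0 < φ z := by
    intro u hu htend
    choose z hzroots hzφ using fun n => (hu n).2
    have hdegn : ∀ n, (p (u n)).natDegree = d := fun n => hdeg _ (hu n).1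
    have hc : ∀ j, Tendsto (fun n => (p (u n)).coeff j) atTop (nhds ((p t).coeff j)) :=
      fun j => ((hcont j).tendsto _).comp htend
    obtain ⟨w, hw, ψ, hψ, hwz⟩ :=
      exists_subseq_root_limit hd hdegn (hdeg _ htmem) hc hzroots
    refine ⟨w, hw, ?_⟩
    have hφt : Tendsto (fun n => φ (z (ψ n))) atTop (nhds (φ w)) := (hφ.tendsto w).comp hwz
    have hge : 0 ≤ φ w := ge_of_tendsto' hφt (fun n => (hzφ (ψ n)).le)
    exact lt_of_le_of_ne hge (Ne.symm (hbar t htmem w hw))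
  -- t ∈ S
  have hut : ∃ u : ℕ → ℝ, (∀ n, u n ∈ S) ∧ Tendsto u atTop (nhds t) := by
    have hex : ∀ n : ℕ, ∃ s ∈ S, t - 1/(n+1) < s := by
      intro n
      refine exists_lt_of_lt_csSup ⟨0, h0S⟩ ?_
      have : (0:ℝ) < 1/(n+1) := by positivity
      linarith
    choose u hu hlt using hex
    refine ⟨u, hu, ?_⟩
    have hle : ∀ n, u n ≤ t := fun n => le_csSup hbdd (hu n)
    have h1 : Tendsto (fun n : ℕ => t - 1/((n:ℝ)+1)) atTop (nhds t) := by
      have h2 := tendsto_one_div_add_atTop_nhds_zero_nat (𝕜 := ℝ)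
      have := (tendsto_const_nhds : Tendsto (fun _ : ℕ => t) atTop (nhds t)).sub h2
      simpa using this
    exact tendsto_of_tendsto_of_tendsto_of_le_of_le h1 tendsto_const_nhds
      (fun n => (hlt n).le) hle
  obtain ⟨u, hu, hutend⟩ := hut
  obtain ⟨z1, hz1, hφz1⟩ := key u hu hutend
  have htlt1 : t < 1 := by
    rcases lt_or_eq_of_le ht1 with h | h
    · exact h
    · exact absurd (hone z1 (h ▸ hz1)) (by linarith)
  set v : ℕ → ℝ := fun n => t + (1 - t)/((n:ℝ) + 2) with hv
  have hvIcc : ∀ n, v n ∈ Set.Icc (0:ℝ) 1 := by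
    intro n
    constructor
    · have : (0:ℝ) < (1 - t)/((n:ℝ)+2) := div_pos (by linarith) (by positivity)
      simp only [hv]; linarith
    · have h2 : (1 - t)/((n:ℝ)+2) ≤ 1 - t := by
        apply div_le_self (by linarith)
        have : (0:ℝ) ≤ (n:ℝ) := Nat.cast_nonneg n
        linarith
      simp only [hv]; linarith
  have hvgt : ∀ n, t < v n := by
    intro n
    have : (0:ℝ) < (1 - t)/((n:ℝ)+2) := div_pos (by linarith) (by positivity)
    simp only [hv]; linarith
  have hvnotS : ∀ n, v n ∉ S := fun n h => absurd (le_csSup hbdd h) (not_le.mpr (hvgt n))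
  have hvtend : Tendsto v atTop (nhds t) := by
    have h2 : Tendsto (fun n : ℕ => (1 - t) * (1/((n:ℝ)+1))) atTop (nhds 0) := by
      have := (tendsto_const_nhds : Tendsto (fun _ : ℕ => 1 - t) atTop (nhds (1-t))).mul
        (tendsto_one_div_add_atTop_nhds_zero_nat (𝕜 := ℝ))
      simpa using this
    have h3 : Tendsto (fun n : ℕ => (1 - t)/((n:ℝ)+2)) atTop (nhds 0) := by
      refine squeeze_zero (fun n => div_nonneg (by linarith) (by positivity)) (fun n => ?_) h2
      rw [mul_one_div]
      apply div_le_div_of_nonneg_left (by linarith) (by positivity)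
      · have : (0:ℝ) ≤ (n:ℝ) := Nat.cast_nonneg n
        linarith
    have := (tendsto_const_nhds : Tendsto (fun _ : ℕ => t) atTop (nhds t)).add h3
    simpa using this
  have hdegv : ∀ n, (p (v n)).natDegree = d := fun n => hdeg _ (hvIcc n)
  have hcv : ∀ j, Tendsto (fun n => (p (v n)).coeff j) atTop (nhds ((p t).coeff j)) :=
    fun j => ((hcont j).tendsto _).comp hvtend
  have hz1eval : (p t).eval z1 = 0 :=
    (mem_roots (nonzero_of_deg hd (hdeg t htmem))).mp hz1
  obtain ⟨r, hr, hrtend⟩ := exists_roots_tendsto hd hdegv (hdeg t htmem) hcv hz1eval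
  have hφr : Tendsto (fun n => φ (r n)) atTop (nhds (φ z1)) := (hφ.tendsto _).comp hrtend
  have hev : ∀ᶠ n in atTop, 0 < φ (r n) := hφr.eventually (eventually_gt_nhds hφz1)
  obtain ⟨n, hn⟩ := hev.exists
  exact hvnotS n ⟨hvIcc n, r n, hr n, hn⟩

/-! ### Hyperbolicity of `σ_k` in cone directions -/

lemma esymm_cast (k : ℕ) (l : Fin m → ℝ) :
    ∑ S ∈ powersetCard k (univ : Finset (Fin m)), ∏ i ∈ S, ((l i : ℝ) : ℂ) =
      ((esymmFin m k l : ℝ) : ℂ) := by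
  unfold esymmFin
  push_cast
  rfl

lemma Fp_coeff_k_cast (a : Fin m → ℂ) (l : Fin m → ℝ) :
    (Fp ℂ m k a (fun i => (l i : ℂ))).coeff k = ((esymmFin m k l : ℝ) : ℂ) := by
  rw [Fp_coeff_k, esymm_cast]

lemma Fp_natDegree_cast {a : Fin m → ℂ} {l : Fin m → ℝ} (hl : esymmFin m k l ≠ 0) :
    (Fp ℂ m k a (fun i => (l i : ℂ))).natDegree = k :=
  le_antisymm (Fp_natDegree_le _ _) (le_natDegree_of_ne_zero
    (by rw [Fp_coeff_k_cast]; exact_mod_cast hl))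

/-- key bridge : `∑_S ∏ (y i + u) = (map ι (Pke y)).eval u` over ℂ. -/
lemma bridge (hk : k ≤ m) (y : Fin m → ℝ) (u : ℂ) :
    ∑ S ∈ powersetCard k (univ : Finset (Fin m)), ∏ i ∈ S, ((y i : ℂ) + u) =
      ((Pke m k y).map Complex.ofRealHom).eval u := by
  rw [← Fp_e_eq_Pke hk, Fp_map]
  have h1 : (Complex.ofRealHom ∘ fun _ : Fin m => (1:ℝ)) = fun _ : Fin m => (1:ℂ) := by
    funext i; simp
  rw [h1, Fp_eval]
  refine Finset.sum_congr rfl fun S _ => Finset.prod_congr rfl fun i _ => ?_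
  simp

lemma Pke_ne_zero (hk : k ≤ m) (y : Fin m → ℝ) : Pke m k y ≠ 0 := by
  intro h
  have := Pke_coeff_k hk y
  rw [h, coeff_zero] at this
  exact absurd this.symm (Nat.cast_ne_zero.mpr (Nat.choose_pos (Nat.sub_le m k)).ne')

lemma roots_map_real (hk : k ≤ m) (y : Fin m → ℝ) {z : ℂ}
    (hz : z ∈ ((Pke m k y).map Complex.ofRealHom).roots) : ∃ r : ℝ, (r : ℂ) = z := by
  rw [(Pke_splits y).roots_map _] at hz
  obtain ⟨r, _, hr⟩ := Multiset.mem_map.mp hz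
  exact ⟨r, hr⟩

lemma eval_I_ne_zero (hk : k ≤ m) (y : Fin m → ℝ) {α : ℝ} (hα : α ≠ 0) :
    ((Pke m k y).map Complex.ofRealHom).eval (α * Complex.I) ≠ 0 := by
  intro h
  have hne : (Pke m k y).map Complex.ofRealHom ≠ 0 := map_ne_zero (Pke_ne_zero hk y)
  have hmem : (α * Complex.I) ∈ ((Pke m k y).map Complex.ofRealHom).roots :=
    (mem_roots hne).mpr h
  obtain ⟨r, hr⟩ := roots_map_real hk y hmem
  have : ((r:ℂ)).im = (α * Complex.I).im := by rw [hr]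
  simp at this
  exact hα this.symm

lemma conj_root {g : ℝ[X]} {z : ℂ} (h : (g.map Complex.ofRealHom).eval z = 0) :
    (g.map Complex.ofRealHom).eval ((starRingEnd ℂ) z) = 0 := by
  rw [eval_map, eval₂_eq_eval_map] at h ⊢
  have hcomm : (starRingEnd ℂ).comp Complex.ofRealHom = Complex.ofRealHom :=
    RingHom.ext fun r => Complex.conj_ofReal r
  have := hom_eval₂ g Complex.ofRealHom (starRingEnd ℂ) z
  rw [eval₂_eq_eval_map, eval₂_eq_eval_map] at this
  rw [hcomm] at this
  rw [← this, h, map_zero]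

/-- the interpolation path from `l` to the all-ones vector -/
def nu (l : Fin m → ℝ) (s : ℝ) : Fin m → ℝ := fun i => (1 - s) * l i + s

lemma nu_zero (l : Fin m → ℝ) : nu l 0 = l := by funext i; simp [nu]

lemma nu_one (l : Fin m → ℝ) : nu l 1 = fun _ => (1:ℝ) := by funext i; simp [nu]

lemma cone_nu (hk : k ≤ m) {l : Fin m → ℝ} (hl : Cone m k l) {s : ℝ}
    (hs : s ∈ Set.Icc (0:ℝ) 1) : Cone m k (nu l s) :=
  cone_segment hk hl hs.1 hs.2

lemma esymm_pos_k (hk1 : 1 ≤ k) {l : Fin m → ℝ} (hl : Cone m k l) :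
    0 < esymmFin m k l := hl k hk1 le_rfl

/-- continuity of the coefficients of the family `s ↦ Fp ℂ a (cast (nu l s))` -/
lemma coeff_cont (a : Fin m → ℂ) (l : Fin m → ℝ) (j : ℕ) :
    Continuous fun s : ℝ => (Fp ℂ m k a (fun i => ((nu l s i : ℝ) : ℂ))).coeff j := by
  simp only [Fp_coeff]
  refine continuous_finset_sum _ fun S _ => continuous_finset_sum _ fun T _ => ?_
  refine Continuous.mul (continuous_finset_prod _ fun i _ => ?_) continuous_const
  have : Continuous fun s : ℝ => ((nu l s i : ℝ) : ℂ) :=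
    Complex.continuous_ofReal.comp (by unfold nu; fun_prop)
  exact this


lemma subclaimA (hk1 : 1 ≤ k) (hk : k ≤ m) {l : Fin m → ℝ} (hl : Cone m k l)
    (x : Fin m → ℝ) {α : ℝ} (hα : 0 < α) :
    ∀ z ∈ (Fp ℂ m k (fun i => (x i : ℂ) + α * Complex.I)
      (fun i => (l i : ℂ))).roots, z.im < 0 := by
  have hd : k ≠ 0 := by omega
  have h11 : (1:ℝ) ∈ Set.Icc (0:ℝ) 1 := by constructor <;> norm_num
  set a : Fin m → ℂ := fun i => (x i : ℂ) + α * Complex.I with ha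
  set p : ℝ → ℂ[X] := fun s => Fp ℂ m k a (fun i => ((nu l s i : ℝ) : ℂ)) with hp
  have hdeg : ∀ s ∈ Set.Icc (0:ℝ) 1, (p s).natDegree = k :=
    fun s hs => Fp_natDegree_cast (esymm_pos_k hk1 (cone_nu hk hl hs)).ne'
  have hbar : ∀ s ∈ Set.Icc (0:ℝ) 1, ∀ z ∈ (p s).roots, z.im ≠ 0 := by
    intro s hs z hz him
    have hz0 : (p s).eval z = 0 := (mem_roots (nonzero_of_deg hd (hdeg s hs))).mp hz
    have hzre : z = ((z.re : ℝ) : ℂ) := Complex.ext rfl (by simp [him])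
    set y : Fin m → ℝ := fun i => x i + nu l s i * z.re with hy
    have hrw : (p s).eval z = ((Pke m k y).map Complex.ofRealHom).eval (α * Complex.I) := by
      rw [hp, Fp_eval, ← bridge hk]
      refine Finset.sum_congr rfl fun S _ => Finset.prod_congr rfl fun i _ => ?_
      have hyi : (y i : ℂ) = (x i : ℂ) + (nu l s i : ℂ) * ((z.re : ℝ) : ℂ) := by
        rw [hy]; push_cast; ring
      rw [hyi, ← hzre, ha]
      ring
    rw [hrw] at hz0
    exact eval_I_ne_zero hk y hα.ne' hz0
  have hone : ∀ z ∈ (p 1).roots, z.im < 0 := by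
    intro z hz
    have hz0 : (p 1).eval z = 0 := (mem_roots (nonzero_of_deg hd (hdeg 1 h11))).mp hz
    have hrw : (p 1).eval z = ((Pke m k x).map Complex.ofRealHom).eval
        (z + α * Complex.I) := by
      rw [hp, Fp_eval, ← bridge hk]
      refine Finset.sum_congr rfl fun S _ => Finset.prod_congr rfl fun i _ => ?_
      have h1 : nu l 1 i = 1 := congrFun (nu_one l) i
      rw [h1, ha]
      push_cast
      ring
    rw [hrw] at hz0
    have hmem : (z + α*Complex.I) ∈ ((Pke m k x).map Complex.ofRealHom).roots :=
      (mem_roots (map_ne_zero (Pke_ne_zero hk x))).mpr hz0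
    obtain ⟨r, hr⟩ := roots_map_real hk x hmem
    have himeq := congrArg Complex.im hr
    simp at himeq
    linarith
  have hconn := conn hd p Complex.im Complex.continuous_im hdeg (coeff_cont a l) hbar hone
  intro z hz
  apply hconn
  have hp0 : p 0 = Fp ℂ m k a (fun i => ((l i : ℝ) : ℂ)) := by
    simp only [hp, nu_zero]
  rw [hp0]
  exact hz

lemma hyp (hk1 : 1 ≤ k) (hk : k ≤ m) {l : Fin m → ℝ} (hl : Cone m k l) (x : Fin m → ℝ) :
    ∀ z ∈ ((Fp ℝ m k x l).map Complex.ofRealHom).roots, z.im = 0 := by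
  have hd : k ≠ 0 := by omega
  set F := (Fp ℝ m k x l).map Complex.ofRealHom with hF
  have hFeq : F = Fp ℂ m k (fun i => (x i : ℂ)) (fun i => (l i : ℂ)) := by
    rw [hF, Fp_map]; rfl
  have hdegF : F.natDegree = k := by
    rw [hFeq]; exact Fp_natDegree_cast (esymm_pos_k hk1 hl).ne'
  have hupper : ∀ z ∈ F.roots, ¬ (0 < z.im) := by
    intro z0 hz0 him
    set q : ℕ → ℂ[X] := fun n => Fp ℂ m k
      (fun i => (x i : ℂ) + ((1/((n:ℝ)+1) : ℝ) : ℂ) * Complex.I)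
      (fun i => (l i : ℂ)) with hq
    have hdegq : ∀ n, (q n).natDegree = k :=
      fun n => Fp_natDegree_cast (esymm_pos_k hk1 hl).ne'
    have hc : ∀ j, Tendsto (fun n => (q n).coeff j) atTop (nhds (F.coeff j)) := by
      intro j
      rw [hFeq]
      simp only [hq, Fp_coeff]
      refine tendsto_finset_sum _ fun S _ => tendsto_finset_sum _ fun T _ => ?_
      refine Tendsto.mul tendsto_const_nhds (tendsto_finset_prod _ fun i _ => ?_)
      have h1 : Tendsto (fun n : ℕ => ((1/((n:ℝ)+1) : ℝ) : ℂ)) atTop (nhds 0) := by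
        rw [show (0:ℂ) = ((0:ℝ):ℂ) by norm_num]
        exact (Complex.continuous_ofReal.tendsto 0).comp
          tendsto_one_div_add_atTop_nhds_zero_nat
      have h2 : Tendsto (fun n : ℕ => (x i : ℂ) + ((1/((n:ℝ)+1) : ℝ) : ℂ) * Complex.I)
          atTop (nhds ((x i : ℂ))) := by
        have := (tendsto_const_nhds :
            Tendsto (fun _ : ℕ => (x i : ℂ)) atTop (nhds ((x i : ℂ)))).add
          (h1.mul (tendsto_const_nhds :
            Tendsto (fun _ : ℕ => Complex.I) atTop (nhds Complex.I)))
        simpa using this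
      exact h2
    have hweval : F.eval z0 = 0 := (mem_roots (nonzero_of_deg hd hdegF)).mp hz0
    obtain ⟨r, hr, hrt⟩ := exists_roots_tendsto hd hdegq hdegF hc hweval
    have him' : Tendsto (fun n => (r n).im) atTop (nhds z0.im) :=
      (Complex.continuous_im.tendsto _).comp hrt
    have hev : ∀ᶠ n in atTop, 0 < (r n).im := him'.eventually (eventually_gt_nhds him)
    obtain ⟨n, hn⟩ := hev.exists
    have := subclaimA hk1 hk hl x (α := 1/((n:ℝ)+1)) (by positivity) (r n) (hr n)
    linarith
  intro z hz
  by_contra hne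
  rcases lt_or_gt_of_ne hne with hlt | hgt
  · have hzeval : F.eval z = 0 := (mem_roots (nonzero_of_deg hd hdegF)).mp hz
    have hconj : F.eval ((starRingEnd ℂ) z) = 0 := by
      rw [hF]
      exact conj_root (by rw [← hF]; exact hzeval)
    have hmem : (starRingEnd ℂ) z ∈ F.roots :=
      (mem_roots (nonzero_of_deg hd hdegF)).mpr hconj
    have h2 := hupper _ hmem
    rw [Complex.conj_im] at h2
    push_neg at h2
    linarith
  · exact hupper z hz hgt


/-! ### Negativity of roots and the core positivity result -/

lemma eval_map_ofReal (g : ℝ[X]) (t : ℝ) :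
    (g.map Complex.ofRealHom).eval ((t:ℝ):ℂ) = ((g.eval t : ℝ) : ℂ) := by
  rw [eval_map, show ((t:ℝ):ℂ) = Complex.ofRealHom t from rfl, eval₂_at_apply]
  rfl

lemma neg (hk1 : 1 ≤ k) (hk : k ≤ m) {l x : Fin m → ℝ} (hl : Cone m k l)
    (hx : Cone m k x) :
    ∀ z ∈ ((Fp ℝ m k x l).map Complex.ofRealHom).roots, z.re < 0 := by
  have hd : k ≠ 0 := by omega
  set p : ℝ → ℂ[X] := fun s => (Fp ℝ m k x (nu l s)).map Complex.ofRealHom with hp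
  have hpeq : ∀ s, p s = Fp ℂ m k (fun i => (x i : ℂ))
      (fun i => ((nu l s i : ℝ) : ℂ)) := by
    intro s
    simp only [hp]
    rw [Fp_map]
    rfl
  have hdeg : ∀ s ∈ Set.Icc (0:ℝ) 1, (p s).natDegree = k := by
    intro s hs
    rw [hpeq s]
    exact Fp_natDegree_cast (esymm_pos_k hk1 (cone_nu hk hl hs)).ne'
  have hcont : ∀ j, Continuous fun s => (p s).coeff j := by
    intro j
    simp only [hpeq]
    exact coeff_cont (fun i => (x i : ℂ)) l j
  have hbar : ∀ s ∈ Set.Icc (0:ℝ) 1, ∀ z ∈ (p s).roots, z.re ≠ 0 := by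
    intro s hs z hz hre
    have him : z.im = 0 := hyp hk1 hk (cone_nu hk hl hs) x z hz
    have hz0 : z = 0 := Complex.ext hre him
    have heval : (p s).eval 0 = 0 := by
      have h3 := (mem_roots (nonzero_of_deg hd (hdeg s hs))).mp hz
      rwa [hz0] at h3
    have heval2 : (Fp ℝ m k x (nu l s)).eval 0 = 0 := by
      have h2 := eval_map_ofReal (Fp ℝ m k x (nu l s)) 0
      rw [show ((0:ℝ):ℂ) = (0:ℂ) by norm_num] at h2
      simp only [hp] at heval
      rw [heval] at h2
      exact_mod_cast h2.symm
    rw [Fp_eval_real] at heval2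
    simp only [mul_zero, add_zero] at heval2
    exact absurd heval2 (esymm_pos_k hk1 hx).ne'
  have hone : ∀ z ∈ (p 1).roots, z.re < 0 := by
    intro z hz
    have hp1 : p 1 = (Pke m k x).map Complex.ofRealHom := by
      simp only [hp]
      rw [nu_one, Fp_e_eq_Pke hk]
    rw [hp1] at hz
    obtain ⟨r, hr⟩ := roots_map_real hk x hz
    have hrroot : (Pke m k x).eval r = 0 := by
      have hmem : (r:ℂ) ∈ ((Pke m k x).map Complex.ofRealHom).roots := hr ▸ hz
      rw [(Pke_splits x).roots_map _] at hmem
      obtain ⟨r', hr', hrr⟩ := Multiset.mem_map.mp hmem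
      have hreq : r' = r := by
        have : ((r':ℝ):ℂ) = ((r:ℝ):ℂ) := hrr
        exact_mod_cast this
      rw [← hreq]
      exact (mem_roots (Pke_ne_zero hk x)).mp hr'
    have hrneg : r < 0 := by
      by_contra hge
      push_neg at hge
      exact absurd hrroot (Pke_eval_pos hk hk1 hx hge).ne'
    have hzre : z.re = r := by rw [← hr]; simp
    rw [hzre]
    exact hrneg
  have hconn := conn hd p Complex.re Complex.continuous_re hdeg hcont hbar hone
  intro z hz
  apply hconn
  have hp0 : p 0 = (Fp ℝ m k x l).map Complex.ofRealHom := by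
    simp only [hp]
    rw [nu_zero]
  rw [hp0]
  exact hz

lemma core (hk1 : 1 ≤ k) (hk : k ≤ m) {l x : Fin m → ℝ} (hl : Cone m k l)
    (hx : Cone m k x) : 0 < esymmFin m k (fun i => x i + l i) := by
  have hd : k ≠ 0 := by omega
  set f := Fp ℝ m k x l with hf
  have hdegf : f.natDegree = k := Fp_natDegree_real (esymm_pos_k hk1 hl).ne'
  have hfne : f ≠ 0 := fun hh => hd (by rw [← hdegf, hh, natDegree_zero])
  have key : ∀ t : ℝ, 0 ≤ t → f.eval t ≠ 0 := by
    intro t ht h0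
    have h1 : (f.map Complex.ofRealHom).eval ((t:ℝ):ℂ) = 0 := by
      rw [eval_map_ofReal, h0]
      norm_num
    have hmem : ((t:ℝ):ℂ) ∈ (f.map Complex.ofRealHom).roots :=
      (mem_roots (map_ne_zero hfne)).mpr h1
    have h2 := neg hk1 hk hl hx _ hmem
    simp at h2
    linarith
  have h0pos : 0 < f.eval 0 := by
    rw [hf, Fp_eval_real]
    simpa using esymm_pos_k hk1 hx
  have h1pos : 0 < f.eval 1 := by
    rcases lt_trichotomy (f.eval 1) 0 with h | h | h
    · exfalso
      have hcon : ContinuousOn (fun t => f.eval t) (Set.Icc 0 1) :=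
        f.continuous.continuousOn
      have hivt := intermediate_value_Icc' zero_le_one hcon
      have h0mem : (0:ℝ) ∈ Set.Icc (f.eval 1) (f.eval 0) := ⟨h.le, h0pos.le⟩
      obtain ⟨t, htmem, hteq⟩ := hivt h0mem
      exact key t htmem.1 hteq
    · exact absurd h (key 1 zero_le_one)
    · exact h
  rw [hf, Fp_eval_real] at h1pos
  simpa using h1pos

lemma cone_add (hk : k ≤ m) {l x : Fin m → ℝ} (hl : Cone m k l) (hx : Cone m k x) :
    Cone m k (fun i => x i + l i) := fun j h1 h2 =>
  core h1 (h2.trans hk) (cone_mono h2 hl) (cone_mono h2 hx)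

end GardingAux

/-- The Garding cone Γ_k in ℝ^{n-1}. -/
def GardingCone (n k : ℕ) : Set (Fin (n - 1) → ℝ) :=
  {lam | ∀ i : ℕ, 1 ≤ i → i ≤ k → 0 < esymmFin (n - 1) i lam}

/-- The Garding cone is a convex cone: closed under addition and positive scalar
multiplication. -/
theorem gardingCone_convexCone (n k : ℕ) :
    (∀ lam mu : Fin (n - 1) → ℝ, lam ∈ GardingCone n k → mu ∈ GardingCone n k →
        lam + mu ∈ GardingCone n k) ∧
    (∀ (c : ℝ) (lam : Fin (n - 1) → ℝ), 0 < c → lam ∈ GardingCone n k →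
        c • lam ∈ GardingCone n k) := by
  constructor
  · intro lam mu hlam hmu
    intro i h1i hik
    by_cases him : i ≤ n - 1
    · have hcl : GardingAux.Cone (n-1) i mu := fun j hj1 hj2 => hmu j hj1 (hj2.trans hik)
      have hcx : GardingAux.Cone (n-1) i lam := fun j hj1 hj2 => hlam j hj1 (hj2.trans hik)
      exact GardingAux.core h1i him hcl hcx
    · push_neg at him
      have h0 := hlam i h1i hik
      rw [GardingAux.esymmFin_zero_of_gt him lam] at h0
      exact absurd h0 (lt_irrefl 0)
  · intro c lam hc hlam i h1i hik
    rw [GardingAux.esymmFin_smul]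
    exact mul_pos (pow_pos hc i) (hlam i h1i hik)
end
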